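/- arXiv:1709.00552 — 6 statements merged into one kernel-verified Lean document; each statement's English description precedes it below -/
import Mathlib

section
/- Fix d ≥ 2 and r ∈ {1,...,d−1}, k ∈ {0,...,d−1} with k+r taken mod d, and real constants u, w, x, y. Define the d²×d² matrix ρ = u Σ_t|tt⟩⟨tt| + w Σ_{t≠t'}|tt'⟩⟨tt'| + x Σ_{t≠τ}|tt⟩⟨ττ| + y Σ_{t≠t'}|tt'⟩⟨t't|. For a ∈ {0,1}^d and s ∈ {0,1}, let Q_a = (d/2^d)|μ_a⟩⟨μ_a| with |μ_a⟩ = (1/√d)Σ_t(−1)^{a_t}|t⟩, and M^{(r)}_{ks} = (1/2)|Ψ^{(r)}_{ks}⟩⟨Ψ^{(r)}_{ks}| with |Ψ^{(r)}_{ks}⟩ = (|k⟩ + (−1)^s|k+r⟩)/√2. Then tr[(Q_a ⊗ M^{(r)}_{ks}) ρ] = (u + (d−1)w)/(2·2^d) + ((x+y)/(2·2^d))·(−1)^s·(−1)^{a_k ⊕ a_{k+r}}. -/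
open Matrix Kronecker

/-- `|μ_a⟩ = (1/√d) Σ_t (−1)^{a_t} |t⟩`. -/
noncomputable def muVec (d : ℕ) (a : Fin d → Bool) : Fin d → ℂ :=
  fun t => (((1 / Real.sqrt d) * (if a t then -1 else 1) : ℝ) : ℂ)

/-- `Q_a = (d/2^d) |μ_a⟩⟨μ_a|`. -/
noncomputable def Qmat (d : ℕ) (a : Fin d → Bool) : Matrix (Fin d) (Fin d) ℂ :=
  ((d : ℂ) / 2 ^ d) • Matrix.of fun i j => muVec d a i * (starRingEnd ℂ) (muVec d a j)

/-- `|Ψ^{(r)}_{ks}⟩ = (|k⟩ + (−1)^s |k+r⟩)/√2`. -/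
noncomputable def psiVec (d : ℕ) (k l : Fin d) (s : Bool) : Fin d → ℂ :=
  fun t => ((if t = k then 1 else 0) +
    (if s then -1 else 1) * (if t = l then 1 else 0)) / (Real.sqrt 2 : ℂ)

/-- `M^{(r)}_{ks} = (1/2)|Ψ^{(r)}_{ks}⟩⟨Ψ^{(r)}_{ks}|`. -/
noncomputable def Mmat (d : ℕ) (k l : Fin d) (s : Bool) : Matrix (Fin d) (Fin d) ℂ :=
  (1 / 2 : ℂ) • Matrix.of fun i j => psiVec d k l s i * (starRingEnd ℂ) (psiVec d k l s j)

/-- `ρ = u Σ_t|tt⟩⟨tt| + w Σ_{t≠t'}|tt'⟩⟨tt'| + x Σ_{t≠τ}|tt⟩⟨ττ| + y Σ_{t≠t'}|tt'⟩⟨t't|`. -/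
def rhoSym (d : ℕ) (u w x y : ℝ) : Matrix (Fin d × Fin d) (Fin d × Fin d) ℂ :=
  Matrix.of fun p q =>
    (if p.1 = p.2 ∧ q = p then (u : ℂ) else 0) +
    (if p.1 ≠ p.2 ∧ q = p then (w : ℂ) else 0) +
    (if p.1 = p.2 ∧ q.1 = q.2 ∧ p.1 ≠ q.1 then (x : ℂ) else 0) +
    (if p.1 ≠ p.2 ∧ q = (p.2, p.1) then (y : ℂ) else 0)

private lemma Qmat_apply (d : ℕ) [NeZero d] (a : Fin d → Bool) (i j : Fin d) :
    Qmat d a i j = (1/2^d : ℂ) * ((if a i then -1 else 1) * (if a j then -1 else 1)) := by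
  have hd0 : (0:ℝ) < d := by exact_mod_cast Nat.pos_of_ne_zero (NeZero.ne d)
  have hd : (d:ℂ) ≠ 0 := Nat.cast_ne_zero.mpr (NeZero.ne d)
  have hs : ((Real.sqrt d : ℝ):ℂ) * ((Real.sqrt d : ℝ):ℂ) = (d:ℂ) := by
    rw [← Complex.ofReal_mul, Real.mul_self_sqrt (Nat.cast_nonneg d)]; simp
  have hs0 : ((Real.sqrt d : ℝ):ℂ) ≠ 0 := by
    simpa using (Real.sqrt_ne_zero'.mpr hd0)
  simp only [Qmat, muVec, Matrix.smul_apply, Matrix.of_apply, smul_eq_mul, Complex.conj_ofReal]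
  push_cast
  field_simp
  rw [sq, hs]
  cases hi : a i <;> cases hj : a j <;> simp <;> ring

private lemma Mmat_apply (d : ℕ) (k l : Fin d) (s : Bool) (i j : Fin d) :
    Mmat d k l s i j = (1/4 : ℂ) *
      ((((if i = k then 1 else 0) + (if s then -1 else 1) * (if i = l then 1 else 0)) *
        ((if j = k then 1 else 0) + (if s then -1 else 1) * (if j = l then 1 else 0)))) := by
  have h2 : ((Real.sqrt 2 : ℝ):ℂ) * ((Real.sqrt 2 : ℝ):ℂ) = 2 := by
    rw [← Complex.ofReal_mul, Real.mul_self_sqrt (by norm_num)]; norm_num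
  have h20 : ((Real.sqrt 2 : ℝ):ℂ) ≠ 0 := by
    simpa using (Real.sqrt_ne_zero'.mpr (by norm_num : (0:ℝ) < 2))
  simp only [Mmat, psiVec, Matrix.smul_apply, Matrix.of_apply, smul_eq_mul, map_div₀,
    _root_.map_add, _root_.map_mul, apply_ite (starRingEnd ℂ), _root_.map_one, map_zero,
    map_neg, Complex.conj_ofReal]
  field_simp
  rw [sq, h2]
  ring


set_option maxHeartbeats 1000000 in
/-- `tr[(Q_a ⊗ M^{(r)}_{ks}) ρ]
  = (u+(d−1)w)/(2·2^d) + ((x+y)/(2·2^d))·(−1)^s·(−1)^{a_k ⊕ a_{k+r}}`. -/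
theorem trace_formula (d : ℕ) [NeZero d] (hd : 2 ≤ d) (u w x y : ℝ)
    (k r : Fin d) (hr : r ≠ 0) (a : Fin d → Bool) (s : Bool) :
    Matrix.trace ((Qmat d a ⊗ₖ Mmat d k (k + r) s) * rhoSym d u w x y) =
      (((u + ((d:ℝ) - 1) * w) / (2 * 2 ^ d)
        + ((x + y) / (2 * 2 ^ d)) * (if s then -1 else 1) *
          (if a k ≠ a (k + r) then -1 else 1) : ℝ) : ℂ) := by
  have hkl : k ≠ k + r := fun h => hr (left_eq_add.mp h)
  set ε : Fin d → ℂ := fun t => if a t then -1 else 1 with hε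
  set σ : ℂ := if s then -1 else 1 with hσdef
  set D : Fin d → ℂ := fun t => (if t = k then 1 else 0) + σ * (if t = k + r then 1 else 0)
    with hD
  have hQ : ∀ i j, Qmat d a i j = (1/2^d : ℂ) * (ε i * ε j) := fun i j => Qmat_apply d a i j
  have hM : ∀ i j, Mmat d k (k+r) s i j = (1/4 : ℂ) * (D i * D j) := fun i j =>
    Mmat_apply d k (k+r) s i j
  have hεε : ∀ t, ε t * ε t = 1 := by intro t; by_cases h : a t <;> simp [hε, h]
  have hσσ : σ * σ = 1 := by cases s <;> simp [hσdef]
  have hDD : ∀ t, D t * D t = (if t = k then 1 else 0) + (if t = k + r then 1 else 0) := by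
    intro t
    by_cases h1 : t = k
    · have h2 : ¬ t = k + r := by rw [h1]; exact hkl
      simp [hD, h1, h2, hr]
    · by_cases h2 : t = k + r
      · simp [hD, h1, h2, hr, hσσ]
      · simp [hD, h1, h2]
  have hsum1 : ∑ t : Fin d, D t * D t = 2 := by
    simp [hDD, Finset.sum_add_distrib, Finset.sum_ite_eq']
    norm_num
  have hsum2 : ∑ t : Fin d, ε t * D t = ε k + ε (k+r) * σ := by
    simp only [hD, mul_add, Finset.sum_add_distrib, mul_ite, mul_zero, mul_one,
      Finset.sum_ite_eq', Finset.mem_univ, if_true]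
  have hsplit : ∀ (P R : Prop) [Decidable P] [Decidable R] (c : ℂ),
      (if ¬P ∧ R then c else 0) = (if R then c else 0) - (if P ∧ R then c else 0) := by
    intro P R _ _ c
    by_cases hP : P <;> by_cases hR : R <;> simp [hP, hR]
  have hsplit2 : ∀ (P R S : Prop) [Decidable P] [Decidable R] [Decidable S] (c : ℂ),
      (if P ∧ R ∧ ¬S then c else 0) = (if P ∧ R then c else 0) - (if P ∧ R ∧ S then c else 0) := by
    intro P R S _ _ _ c
    by_cases hP : P <;> by_cases hR : R <;> by_cases hS : S <;> simp [hP, hR, hS]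
  have hdiag : ∀ (v : ℝ), (∑ t : Fin d, Qmat d a t t * Mmat d k (k+r) s t t * (v:ℂ))
      = (1/2^d : ℂ) * (1/4) * v * 2 := by
    intro v
    have hpt : ∀ t : Fin d, Qmat d a t t * Mmat d k (k+r) s t t * (v:ℂ)
        = ((1/2^d : ℂ) * (1/4) * v) * (D t * D t) := by
      intro t; rw [hQ, hM, hεε]; ring
    rw [Finset.sum_congr rfl (fun t _ => hpt t), ← Finset.mul_sum, hsum1]
  have hT1 : (∑ t1 : Fin d, ∑ t2 : Fin d, ∑ q1 : Fin d, ∑ q2 : Fin d,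
      Qmat d a t1 q1 * Mmat d k (k + r) s t2 q2 *
        if q1 = q2 ∧ t1 = q1 ∧ t2 = q2 then (u:ℂ) else 0)
      = (1/2^d : ℂ) * (1/4) * u * 2 := by
    simp only [mul_ite, mul_zero, ite_and, Finset.sum_ite_eq, Finset.sum_ite_eq',
      Finset.mem_univ, if_true]
    exact hdiag u
  have hoff : (∑ t1 : Fin d, ∑ q1 : Fin d, Qmat d a t1 q1 * Mmat d k (k+r) s t1 q1)
      = (1/2^d : ℂ) * (1/4) * ((ε k + ε (k+r) * σ) * (ε k + ε (k+r) * σ)) := by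
    have hpt : ∀ t q : Fin d, Qmat d a t q * Mmat d k (k+r) s t q
        = ((1/2^d : ℂ) * (1/4)) * ((ε t * D t) * (ε q * D q)) := by
      intro t q; rw [hQ, hM]; ring
    calc (∑ t1 : Fin d, ∑ q1 : Fin d, Qmat d a t1 q1 * Mmat d k (k+r) s t1 q1)
        = ∑ t1 : Fin d, ∑ q1 : Fin d,
            ((1/2^d : ℂ) * (1/4)) * ((ε t1 * D t1) * (ε q1 * D q1)) := by
          exact Finset.sum_congr rfl fun t _ => Finset.sum_congr rfl fun q _ => hpt t q
      _ = ((1/2^d : ℂ) * (1/4)) *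
            ((∑ t : Fin d, ε t * D t) * (∑ q : Fin d, ε q * D q)) := by
          rw [Finset.sum_mul_sum]
          simp only [← Finset.mul_sum]
      _ = _ := by rw [hsum2]
  have hoff2 : (∑ t1 : Fin d, ∑ q1 : Fin d, Qmat d a t1 q1 * Mmat d k (k+r) s q1 t1)
      = (1/2^d : ℂ) * (1/4) * ((ε k + ε (k+r) * σ) * (ε k + ε (k+r) * σ)) := by
    have hpt : ∀ t q : Fin d, Qmat d a t q * Mmat d k (k+r) s q t
        = ((1/2^d : ℂ) * (1/4)) * ((ε t * D t) * (ε q * D q)) := by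
      intro t q; rw [hQ, hM]; ring
    calc (∑ t1 : Fin d, ∑ q1 : Fin d, Qmat d a t1 q1 * Mmat d k (k+r) s q1 t1)
        = ∑ t1 : Fin d, ∑ q1 : Fin d,
            ((1/2^d : ℂ) * (1/4)) * ((ε t1 * D t1) * (ε q1 * D q1)) := by
          exact Finset.sum_congr rfl fun t _ => Finset.sum_congr rfl fun q _ => hpt t q
      _ = ((1/2^d : ℂ) * (1/4)) *
            ((∑ t : Fin d, ε t * D t) * (∑ q : Fin d, ε q * D q)) := by
          rw [Finset.sum_mul_sum]
          simp only [← Finset.mul_sum]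
      _ = _ := by rw [hsum2]
  have hT2 : (∑ t1 : Fin d, ∑ t2 : Fin d, ∑ q1 : Fin d, ∑ q2 : Fin d,
      Qmat d a t1 q1 * Mmat d k (k + r) s t2 q2 *
        if ¬q1 = q2 ∧ t1 = q1 ∧ t2 = q2 then (w:ℂ) else 0)
      = (d:ℂ) * ((1/2^d : ℂ) * (1/4) * w * 2) - (1/2^d : ℂ) * (1/4) * w * 2 := by
    simp only [hsplit, mul_sub, Finset.sum_sub_distrib]
    simp only [mul_ite, mul_zero, ite_and, Finset.sum_ite_eq, Finset.sum_ite_eq',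
      Finset.sum_ite_irrel, Finset.sum_const_zero, Finset.mem_univ, if_true]
    rw [hdiag w]
    congr 1
    have hpt : ∀ t1 t2 : Fin d, Qmat d a t1 t1 * Mmat d k (k+r) s t2 t2 * (w:ℂ)
        = ((1/2^d : ℂ) * (1/4) * w) * (D t2 * D t2) := by
      intro t1 t2; rw [hQ, hM, hεε]; ring
    calc (∑ t1 : Fin d, ∑ t2 : Fin d, Qmat d a t1 t1 * Mmat d k (k+r) s t2 t2 * (w:ℂ))
        = ∑ t1 : Fin d, ((1/2^d : ℂ) * (1/4) * w) * 2 := by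
          refine Finset.sum_congr rfl fun t1 _ => ?_
          rw [Finset.sum_congr rfl (fun t2 _ => hpt t1 t2), ← Finset.mul_sum, hsum1]
      _ = (d:ℂ) * ((1/2^d : ℂ) * (1/4) * w * 2) := by
          simp [Finset.sum_const, Finset.card_univ, mul_assoc]
  have hT3 : (∑ t1 : Fin d, ∑ t2 : Fin d, ∑ q1 : Fin d, ∑ q2 : Fin d,
      Qmat d a t1 q1 * Mmat d k (k + r) s t2 q2 *
        if q1 = q2 ∧ t1 = t2 ∧ ¬q1 = t1 then (x:ℂ) else 0)
      = (1/2^d : ℂ) * (1/4) * ((ε k + ε (k+r) * σ) * (ε k + ε (k+r) * σ)) * x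
        - (1/2^d : ℂ) * (1/4) * x * 2 := by
    simp only [hsplit2, mul_sub, Finset.sum_sub_distrib]
    simp only [mul_ite, mul_zero, ite_and, Finset.sum_ite_eq, Finset.sum_ite_eq',
      Finset.sum_ite_irrel, Finset.sum_const_zero, Finset.mem_univ, if_true]
    rw [hdiag x]
    congr 1
    rw [show (∑ t1 : Fin d, ∑ q1 : Fin d, Qmat d a t1 q1 * Mmat d k (k+r) s t1 q1 * (x:ℂ))
        = (∑ t1 : Fin d, ∑ q1 : Fin d, Qmat d a t1 q1 * Mmat d k (k+r) s t1 q1) * (x:ℂ) by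
      simp only [Finset.sum_mul]]
    rw [hoff]
  have hT4 : (∑ t1 : Fin d, ∑ t2 : Fin d, ∑ q1 : Fin d, ∑ q2 : Fin d,
      Qmat d a t1 q1 * Mmat d k (k + r) s t2 q2 *
        if ¬q1 = q2 ∧ t1 = q2 ∧ t2 = q1 then (y:ℂ) else 0)
      = (1/2^d : ℂ) * (1/4) * ((ε k + ε (k+r) * σ) * (ε k + ε (k+r) * σ)) * y
        - (1/2^d : ℂ) * (1/4) * y * 2 := by
    simp only [hsplit, mul_sub, Finset.sum_sub_distrib]
    simp only [mul_ite, mul_zero, ite_and, Finset.sum_ite_eq, Finset.sum_ite_eq',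
      Finset.sum_ite_irrel, Finset.sum_const_zero, Finset.mem_univ, if_true]
    rw [hdiag y]
    congr 1
    rw [show (∑ t1 : Fin d, ∑ t2 : Fin d, Qmat d a t1 t2 * Mmat d k (k+r) s t2 t1 * (y:ℂ))
        = (∑ t1 : Fin d, ∑ t2 : Fin d, Qmat d a t1 t2 * Mmat d k (k+r) s t2 t1) * (y:ℂ) by
      simp only [Finset.sum_mul]]
    rw [hoff2]
  have expand : Matrix.trace ((Qmat d a ⊗ₖ Mmat d k (k+r) s) * rhoSym d u w x y)
      = ∑ t1 : Fin d, ∑ t2 : Fin d, ∑ q1 : Fin d, ∑ q2 : Fin d,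
        (Qmat d a t1 q1 * Mmat d k (k+r) s t2 q2) * rhoSym d u w x y (q1,q2) (t1,t2) := by
    rw [Matrix.trace]
    simp [Matrix.diag, Matrix.mul_apply, Fintype.sum_prod_type, Matrix.kroneckerMap_apply]
  rw [expand]
  simp only [rhoSym, Matrix.of_apply, Prod.mk.injEq, ne_eq, mul_add, Finset.sum_add_distrib]
  rw [hT1, hT2, hT3, hT4]
  have h2d : (2:ℂ)^d ≠ 0 := pow_ne_zero _ two_ne_zero
  have h2dr : (2:ℝ)^d ≠ 0 := pow_ne_zero _ two_ne_zero
  rcases s <;> by_cases h1 : a k <;> by_cases h2 : a (k+r) <;>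
    simp only [hε, hσdef, h1, h2, if_true, if_false, Bool.false_eq_true, not_true, not_false_iff, not_false_eq_true,
      ite_true, ite_false] <;>
    push_cast [not_false_eq_true, if_true] <;> field_simp <;> ring
end

section
/- For k ∈ {0,...,d−1} and r ∈ {1,...,d−1}, with ℓ = k+r mod d, the average over all a ∈ {0,1}^d with a_k ⊕ a_ℓ = s' of |μ_a⟩⟨μ_a| equals 𝟙/d + (−1)^{s'}(|k⟩⟨ℓ| + |ℓ⟩⟨k|)/d. -/
/-- sign of a boolean as a complex number. -/
def sgnC (b : Bool) : ℂ := if b then -1 else 1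

lemma sgnC_mul_self (b : Bool) : sgnC b * sgnC b = 1 := by cases b <;> simp [sgnC]

lemma sgnC_not (b : Bool) : sgnC (!b) = - sgnC b := by cases b <;> simp [sgnC]

lemma sgnC_xor (b c : Bool) : sgnC (xor b c) = sgnC b * sgnC c := by
  cases b <;> cases c <;> simp [sgnC]

/-- Cardinality of the filtered set. -/
lemma card_filter_xor (d : ℕ) (k l : Fin d) (hkl : k ≠ l) (s' : Bool) :
    (Finset.univ.filter (fun a : Fin d → Bool => xor (a k) (a l) = s')).card
      = 2 ^ (d - 1) := by
  classical
  have hbij : ∀ t : Bool,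
      (Finset.univ.filter (fun a : Fin d → Bool => xor (a k) (a l) = t)).card =
      (Finset.univ.filter (fun a : Fin d → Bool => xor (a k) (a l) = !t)).card := by
    intro t
    apply Finset.card_nbij (fun a => Function.update a l (!a l))
    · intro a ha
      simp only [Finset.mem_coe, Finset.mem_filter, Finset.mem_univ, true_and] at ha ⊢
      rw [Function.update_of_ne hkl, Function.update_self, Bool.xor_not, ha]
    · intro a ha b hb hab
      have := congrArg (fun f => Function.update f l (!(f l))) hab
      simpa [Function.update_idem] using this
    · intro b hb
      simp only [Finset.coe_filter, Finset.mem_univ, true_and, Set.mem_image,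
        Set.mem_setOf_eq] at hb ⊢
      refine ⟨Function.update b l (!b l), ?_, ?_⟩
      · rw [Function.update_of_ne hkl, Function.update_self, Bool.xor_not, hb, Bool.not_not]
      · simp [Function.update_idem]
  have hneg : (Finset.univ.filter (fun a : Fin d → Bool => ¬ (xor (a k) (a l) = s'))) =
      Finset.univ.filter (fun a : Fin d → Bool => xor (a k) (a l) = !s') := by
    apply Finset.filter_congr
    intro a _
    cases h : xor (a k) (a l) <;> cases s' <;> simp [h]
  have htot : (Finset.univ.filter (fun a : Fin d → Bool => xor (a k) (a l) = s')).card
      + (Finset.univ.filter (fun a : Fin d → Bool => xor (a k) (a l) = s')).card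
      = 2 ^ d := by
    nth_rewrite 2 [hbij s']
    rw [← hneg, Finset.card_filter_add_card_filter_not, Finset.card_univ,
      Fintype.card_fun, Fintype.card_bool, Fintype.card_fin]
  have hdpos : 0 < d := k.pos
  refine Nat.eq_of_mul_eq_mul_left (show 0 < 2 by norm_num) ?_
  rw [two_mul, htot, ← pow_succ', Nat.sub_add_cancel hdpos]

/-- If one of `i, j` is outside `{k, l}` and `i ≠ j`, flipping that coordinate kills the sum. -/
lemma sum_sgn_zero (d : ℕ) (k l : Fin d) (s' : Bool) (i j m : Fin d)
    (hij : i ≠ j) (hm : m = i ∨ m = j) (hmk : m ≠ k) (hml : m ≠ l) :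
    ∑ a ∈ Finset.univ.filter (fun a : Fin d → Bool => xor (a k) (a l) = s'),
      sgnC (a i) * sgnC (a j) = 0 := by
  classical
  apply Finset.sum_involution (fun a _ => Function.update a m (!a m))
  · intro a _
    rcases hm with rfl | rfl
    · rw [Function.update_self, Function.update_of_ne (Ne.symm hij), sgnC_not]
      ring
    · rw [Function.update_self, Function.update_of_ne hij, sgnC_not]
      ring
  · intro a ha h
    intro hcontra
    have := congrFun hcontra m
    rw [Function.update_self] at this
    exact (Bool.not_ne_self (a m)) this
  · intro a ha
    simp [Function.update_idem]
  · intro a ha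
    simp only [Finset.mem_filter, Finset.mem_univ, true_and] at ha ⊢
    rw [Function.update_of_ne hmk.symm, Function.update_of_ne hml.symm]
    exact ha

lemma sum_sgn_pair (d : ℕ) (k l : Fin d) (hkl : k ≠ l) (s' : Bool) (i j : Fin d) :
    ∑ a ∈ Finset.univ.filter (fun a : Fin d → Bool => xor (a k) (a l) = s'),
      sgnC (a i) * sgnC (a j) =
    (if i = j then (2 : ℂ) ^ (d - 1)
     else if (i = k ∧ j = l) ∨ (i = l ∧ j = k) then sgnC s' * 2 ^ (d - 1)
     else 0) := by
  classical
  by_cases hij : i = j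
  · subst hij
    simp only [if_pos rfl]
    rw [Finset.sum_congr rfl (fun a _ => sgnC_mul_self (a i)), Finset.sum_const,
      card_filter_xor d k l hkl s', nsmul_eq_mul, mul_one]
    push_cast
    ring
  · rw [if_neg hij]
    by_cases hc : (i = k ∧ j = l) ∨ (i = l ∧ j = k)
    · rw [if_pos hc]
      have hconst : ∀ a ∈ Finset.univ.filter
          (fun a : Fin d → Bool => xor (a k) (a l) = s'),
          sgnC (a i) * sgnC (a j) = sgnC s' := by
        intro a ha
        simp only [Finset.mem_filter, Finset.mem_univ, true_and] at ha
        rcases hc with ⟨rfl, rfl⟩ | ⟨rfl, rfl⟩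
        · rw [← sgnC_xor, ha]
        · rw [mul_comm, ← sgnC_xor, ha]
      rw [Finset.sum_congr rfl hconst, Finset.sum_const,
        card_filter_xor d k l hkl s', nsmul_eq_mul]
      push_cast
      ring
    · rw [if_neg hc]
      push_neg at hc
      by_cases hik : i = k
      · subst hik
        have hjl : j ≠ l := hc.1 rfl
        exact sum_sgn_zero d i l s' i j j hij (Or.inr rfl) (Ne.symm hij) hjl
      · by_cases hil : i = l
        · subst hil
          have hjk : j ≠ k := hc.2 rfl
          exact sum_sgn_zero d k i s' i j j hij (Or.inr rfl) hjk (Ne.symm hij)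
        · exact sum_sgn_zero d k l s' i j i hij (Or.inl rfl) hik hil

/-- for `ℓ = k + r mod d` (`ℓ ≠ k`), the average of `|μ_a⟩⟨μ_a|` over the
`2^(d−1)` strings `a` with `a_k ⊕ a_ℓ = s'` equals `𝟙/d + (−1)^{s'}(|k⟩⟨ℓ| + |ℓ⟩⟨k|)/d`. -/
theorem average_mu_outer (d : ℕ) [NeZero d] (hd : 2 ≤ d)
    (k r : Fin d) (hr : r ≠ 0) (s' : Bool) :
    ((2 : ℂ) ^ (d - 1))⁻¹ •
      ∑ a ∈ Finset.univ.filter (fun a : Fin d → Bool => xor (a k) (a (k + r)) = s'),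
        Matrix.of (fun i j => muVec d a i * (starRingEnd ℂ) (muVec d a j)) =
    ((d : ℂ))⁻¹ • (1 : Matrix (Fin d) (Fin d) ℂ) +
      ((if s' then -1 else 1) / (d : ℂ)) •
        (Matrix.single k (k + r) 1 + Matrix.single (k + r) k 1) := by
  classical
  have hkl : k ≠ k + r := by
    intro h
    apply hr
    have := congrArg (fun x => x - k) h
    simpa using this.symm
  have hdR : (0 : ℝ) < (d : ℝ) := by
    exact_mod_cast Nat.pos_of_ne_zero (NeZero.ne d)
  have hdC : (d : ℂ) ≠ 0 := Nat.cast_ne_zero.mpr (NeZero.ne d)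
  have h2C : ((2 : ℂ) ^ (d - 1)) ≠ 0 := pow_ne_zero _ two_ne_zero
  have hmu : ∀ (a : Fin d → Bool) (t : Fin d),
      muVec d a t = ((1 / Real.sqrt d : ℝ) : ℂ) * sgnC (a t) := by
    intro a t
    unfold muVec sgnC
    by_cases h : a t <;> simp [h]
  have hconj : ∀ (a : Fin d → Bool) (t : Fin d),
      (starRingEnd ℂ) (muVec d a t) = muVec d a t := by
    intro a t
    exact Complex.conj_ofReal _
  have hcoef : ((1 / Real.sqrt d : ℝ) : ℂ) * ((1 / Real.sqrt d : ℝ) : ℂ)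
      = (d : ℂ)⁻¹ := by
    rw [← Complex.ofReal_mul]
    have : (1 / Real.sqrt d) * (1 / Real.sqrt d) = (d : ℝ)⁻¹ := by
      rw [div_mul_div_comm, one_mul, Real.mul_self_sqrt hdR.le, one_div]
    rw [this]
    push_cast
    rfl
  have hsgn : (if s' then (-1 : ℂ) else 1) = sgnC s' := rfl
  ext i j
  simp only [Matrix.smul_apply, Matrix.sum_apply, Matrix.of_apply, Matrix.add_apply,
    Matrix.one_apply, Matrix.single, smul_eq_mul, hsgn]
  have hterm : ∀ a : Fin d → Bool,
      muVec d a i * (starRingEnd ℂ) (muVec d a j)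
        = (d : ℂ)⁻¹ * (sgnC (a i) * sgnC (a j)) := by
    intro a
    rw [hconj, hmu, hmu, ← hcoef]
    ring
  rw [Finset.sum_congr rfl (fun a _ => hterm a), ← Finset.mul_sum,
    sum_sgn_pair d k (k + r) hkl s' i j]
  by_cases hij : i = j
  · subst hij
    rw [if_pos rfl, if_pos rfl]
    have h1 : ¬ (k = i ∧ k + r = i) := fun h => hkl (h.1.trans h.2.symm)
    have h2 : ¬ (k + r = i ∧ k = i) := fun h => hkl (h.2.trans h.1.symm)
    rw [if_neg h1, if_neg h2]
    field_simp
    ring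
  · rw [if_neg hij, if_neg (fun h : i = j => hij h)]
    by_cases hc : (i = k ∧ j = k + r) ∨ (i = k + r ∧ j = k)
    · rw [if_pos hc]
      rcases hc with ⟨rfl, rfl⟩ | ⟨rfl, rfl⟩
      · rw [if_pos ⟨rfl, rfl⟩, if_neg (fun h => hkl h.2)]
        field_simp
        ring
      · rw [if_neg (fun h => hkl h.1), if_pos ⟨rfl, rfl⟩]
        field_simp
        ring
    · rw [if_neg hc]
      push_neg at hc
      have h1 : ¬ (k = i ∧ k + r = j) := fun h => (hc.1 h.1.symm) h.2.symm
      have h2 : ¬ (k + r = i ∧ k = j) := fun h => (hc.2 h.1.symm) h.2.symm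
      rw [if_neg h1, if_neg h2]
      simp
end

section
/- For k ∈ {0,...,d−1}, r ∈ {1,...,d−1}, ℓ = k+r mod d, and fixed bits a_k, a_ℓ, the sum (d/2^d) Σ_a |μ_a⟩⟨μ_a| over the 2^{d−2} strings a ∈ {0,1}^d with those two bits fixed equals (1/4)𝟙 + (1/4)(−1)^{a_k + a_ℓ}(|k⟩⟨ℓ| + |ℓ⟩⟨k|). -/
lemma card_two_fixed (d : ℕ) (k l : Fin d) (hkl : k ≠ l) (bk bl : Bool) :
    (Finset.univ.filter (fun a : Fin d → Bool => a k = bk ∧ a l = bl)).card = 2 ^ (d - 2) := by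
  have e : {a : Fin d → Bool // a k = bk ∧ a l = bl} ≃ ({t : Fin d // t ≠ k ∧ t ≠ l} → Bool) :=
    { toFun := fun a t => a.1 t.1
      invFun := fun g =>
        ⟨fun t => if h1 : t = k then bk else if h2 : t = l then bl else g ⟨t, h1, h2⟩, by
          refine ⟨by simp, ?_⟩
          simp [hkl.symm]⟩
      left_inv := by
        rintro ⟨a, h1, h2⟩
        ext t
        by_cases htk : t = k
        · simp [htk, h1]
        · by_cases htl : t = l
          · subst htl; simp [Ne.symm hkl, h2]
          · simp [htk, htl]
      right_inv := by
        intro g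
        funext t
        simp [t.2.1, t.2.2] }
  have h1 : (Finset.univ.filter (fun a : Fin d → Bool => a k = bk ∧ a l = bl)).card
      = Fintype.card {a : Fin d → Bool // a k = bk ∧ a l = bl} := by
    rw [Fintype.card_subtype]
  rw [h1, Fintype.card_congr e, Fintype.card_fun, Fintype.card_bool]
  congr 1
  rw [Fintype.card_subtype]
  have : Finset.univ.filter (fun t : Fin d => t ≠ k ∧ t ≠ l) = Finset.univ \ {k, l} := by
    ext t; simp [and_comm]
  rw [this, Finset.card_sdiff_of_subset (by simp)]
  simp [Finset.card_insert_of_notMem, hkl]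

lemma sum_eps_zero {d : ℕ} (k l : Fin d) (bk bl : Bool) (i j m : Fin d)
    (hij : i ≠ j) (hm : m = i ∨ m = j) (hmk : m ≠ k) (hml : m ≠ l) :
    ∑ a ∈ Finset.univ.filter (fun a : Fin d → Bool => a k = bk ∧ a l = bl),
      (if a i then (-1:ℂ) else 1) * (if a j then -1 else 1) = 0 := by
  refine Finset.sum_involution (fun a _ => Function.update a m (!a m)) ?_ ?_
    (fun a ha => ?_) (fun a ha => ?_)
  · intro a ha
    rcases hm with rfl | rfl
    · simp only [Function.update_self, Function.update_of_ne (Ne.symm hij)]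
      cases a m <;> cases a j <;> norm_num
    · simp only [Function.update_self, Function.update_of_ne hij]
      cases a m <;> cases a i <;> norm_num
  · intro a ha _
    intro h
    have := congrFun h m
    simp at this
  · simp only [Finset.mem_filter, Finset.mem_univ, true_and] at ha ⊢
    simp only [Function.update_of_ne (Ne.symm hmk), Function.update_of_ne (Ne.symm hml)]
    exact ha
  · funext t
    by_cases htm : t = m
    · subst htm; simp
    · simp [Function.update_of_ne htm]

lemma mu_entry (d : ℕ) (hd : d ≠ 0) (a : Fin d → Bool) (i j : Fin d) :
    muVec d a i * (starRingEnd ℂ) (muVec d a j)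
      = (1/(d:ℂ)) * ((if a i then -1 else 1) * (if a j then -1 else 1)) := by
  unfold muVec
  rw [Complex.conj_ofReal, ← Complex.ofReal_mul]
  have hs : Real.sqrt d * Real.sqrt d = d := Real.mul_self_sqrt (Nat.cast_nonneg d)
  have h1 : ((1 / Real.sqrt d) * (if a i then (-1:ℝ) else 1))
      * ((1 / Real.sqrt d) * (if a j then -1 else 1))
      = (1/(d:ℝ)) * ((if a i then -1 else 1) * (if a j then -1 else 1)) := by
    have h2 : (1 / Real.sqrt d) * (1 / Real.sqrt d) = 1 / (d:ℝ) := by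
      rw [div_mul_div_comm, one_mul, hs]
    calc ((1 / Real.sqrt d) * (if a i then (-1:ℝ) else 1))
        * ((1 / Real.sqrt d) * (if a j then -1 else 1))
        = ((1 / Real.sqrt d) * (1 / Real.sqrt d))
          * ((if a i then (-1:ℝ) else 1) * (if a j then -1 else 1)) := by ring
      _ = _ := by rw [h2]
  rw [h1]
  push_cast [apply_ite (Complex.ofReal)]
  ring

lemma main_aux (d : ℕ) (hd : 3 ≤ d) (k l : Fin d) (hlk : l ≠ k) (bk bl : Bool) :
    ((d : ℂ) / 2 ^ d) •
      ∑ a ∈ Finset.univ.filter (fun a : Fin d → Bool => a k = bk ∧ a l = bl),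
        Matrix.of (fun i j => muVec d a i * (starRingEnd ℂ) (muVec d a j)) =
    (1 / 4 : ℂ) • (1 : Matrix (Fin d) (Fin d) ℂ) +
      ((1 / 4 : ℂ) * (if xor bk bl then -1 else 1)) •
        (Matrix.single k l 1 + Matrix.single l k 1) := by
  classical
  have hd0 : d ≠ 0 := by omega
  have hpow : (2:ℂ)^d = 2^(d-2) * 4 := by
    have h : d - 2 + 2 = d := by omega
    rw [← h, pow_add]; norm_num
  have hdC : (d:ℂ) ≠ 0 := Nat.cast_ne_zero.mpr hd0
  have hcard := card_two_fixed d k l (Ne.symm hlk) bk bl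
  ext i j
  simp only [Matrix.smul_apply, Matrix.sum_apply, Matrix.of_apply, Matrix.add_apply,
    Matrix.one_apply, Matrix.single, smul_eq_mul]
  rw [Finset.sum_congr rfl (fun a _ => mu_entry d hd0 a i j), ← Finset.mul_sum]
  by_cases hij : i = j
  · subst hij
    have hterm : ∀ a ∈ Finset.univ.filter (fun a : Fin d → Bool => a k = bk ∧ a l = bl),
        (if a i then (-1:ℂ) else 1) * (if a i then -1 else 1) = 1 := by
      intro a _; cases a i <;> norm_num
    rw [Finset.sum_congr rfl hterm, Finset.sum_const, hcard, nsmul_eq_mul, mul_one]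
    rw [if_pos rfl, if_neg (show ¬(k = i ∧ l = i) from fun h => hlk (h.2.trans h.1.symm)),
      if_neg (show ¬(l = i ∧ k = i) from fun h => hlk (h.1.trans h.2.symm))]
    push_cast
    rw [hpow]
    field_simp
    ring
  · have hc : ∀ b1 b2 : Bool, (if b1 then (-1:ℂ) else 1) * (if b2 then -1 else 1)
        = (if xor b1 b2 then -1 else 1) := by intro b1 b2; cases b1 <;> cases b2 <;> norm_num
    by_cases h1 : k = i ∧ l = j
    · obtain ⟨hki, hlj⟩ := h1
      have hterm : ∀ a ∈ Finset.univ.filter (fun a : Fin d → Bool => a k = bk ∧ a l = bl),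
          (if a i then (-1:ℂ) else 1) * (if a j then -1 else 1)
            = (if xor bk bl then (-1:ℂ) else 1) := by
        intro a ha
        simp only [Finset.mem_filter, Finset.mem_univ, true_and] at ha
        rw [← hki, ← hlj, ha.1, ha.2, hc]
      rw [Finset.sum_congr rfl hterm, Finset.sum_const, nsmul_eq_mul, hcard]
      rw [if_neg hij, if_pos (show k = i ∧ l = j from ⟨hki, hlj⟩),
        if_neg (show ¬(l = i ∧ k = j) from fun h => hlk (h.1.trans hki.symm))]
      push_cast
      rw [hpow]
      field_simp
      ring
    · by_cases h2 : l = i ∧ k = j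
      · obtain ⟨hli, hkj⟩ := h2
        have hterm : ∀ a ∈ Finset.univ.filter (fun a : Fin d → Bool => a k = bk ∧ a l = bl),
            (if a i then (-1:ℂ) else 1) * (if a j then -1 else 1)
              = (if xor bk bl then (-1:ℂ) else 1) := by
          intro a ha
          simp only [Finset.mem_filter, Finset.mem_univ, true_and] at ha
          rw [← hli, ← hkj, ha.1, ha.2, show ∀ b1 b2 : Bool,
            (if b2 then (-1:ℂ) else 1) * (if b1 then -1 else 1)
              = (if xor b1 b2 then -1 else 1) from by
                intro b1 b2; cases b1 <;> cases b2 <;> norm_num]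
        rw [Finset.sum_congr rfl hterm, Finset.sum_const, nsmul_eq_mul, hcard]
        rw [if_neg hij, if_neg (show ¬(k = i ∧ l = j) from fun h => hlk (hli.trans h.1.symm)),
          if_pos (show l = i ∧ k = j from ⟨hli, hkj⟩)]
        push_cast
        rw [hpow]
        field_simp
        ring
      · have hS : ∑ a ∈ Finset.univ.filter (fun a : Fin d → Bool => a k = bk ∧ a l = bl),
            (if a i then (-1:ℂ) else 1) * (if a j then -1 else 1) = 0 := by
          by_cases hik : i = k
          · subst hik
            have hjl : j ≠ l := fun h => h1 ⟨rfl, h.symm⟩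
            exact sum_eps_zero i l bk bl i j j hij (Or.inr rfl) (Ne.symm hij) hjl
          · by_cases hil : i = l
            · subst hil
              have hjk : j ≠ k := fun h => h2 ⟨rfl, h.symm⟩
              exact sum_eps_zero k i bk bl i j j hij (Or.inr rfl) hjk (Ne.symm hij)
            · exact sum_eps_zero k l bk bl i j i hij (Or.inl rfl) (fun h => hik h)
                (fun h => hil h)
        rw [hS, if_neg hij, if_neg (show ¬(k = i ∧ l = j) from h1),
          if_neg (show ¬(l = i ∧ k = j) from h2)]
        ring

/-- for `ℓ = k + r mod d` (`ℓ ≠ k`) and fixed bits `b_k, b_ℓ`,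
`(d/2^d) Σ_{a : a_k = b_k, a_ℓ = b_ℓ} |μ_a⟩⟨μ_a|
  = (1/4)𝟙 + (1/4)(−1)^{b_k + b_ℓ}(|k⟩⟨ℓ| + |ℓ⟩⟨k|)`. -/
theorem partial_mu_sum (d : ℕ) [NeZero d] (hd : 3 ≤ d)
    (k r : Fin d) (hr : r ≠ 0) (bk bl : Bool) :
    ((d : ℂ) / 2 ^ d) •
      ∑ a ∈ Finset.univ.filter (fun a : Fin d → Bool => a k = bk ∧ a (k + r) = bl),
        Matrix.of (fun i j => muVec d a i * (starRingEnd ℂ) (muVec d a j)) =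
    (1 / 4 : ℂ) • (1 : Matrix (Fin d) (Fin d) ℂ) +
      ((1 / 4 : ℂ) * (if xor bk bl then -1 else 1)) •
        (Matrix.single k (k + r) 1 + Matrix.single (k + r) k 1) := by
  have hlk : k + r ≠ k := fun h => hr (by rwa [add_eq_left] at h)
  exact main_aux d hd k (k + r) hlk bk bl
end

section
/- Let x_d ∈ (0,1) solve (1 − x/(d−2))^{1/2} + ((d−1)/(d−2))(1 − x/(d−2))^{−1/2} + (√x − 1/√x)/√(d−2) − 2 = 0, and set β_* = (x_d/2)/(1 + x_d). Then as d → ∞, β_* = 1/4 − 1/(8√(d−2)) − O((d−2)^{−3/2}). -/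
set_option maxHeartbeats 4000000


/-- if `x_d ∈ (0,1)` solves
`(1 − x/(d−2))^{1/2} + ((d−1)/(d−2))(1 − x/(d−2))^{−1/2} + (√x − 1/√x)/√(d−2) − 2 = 0`
and `β_* = (x_d/2)/(1 + x_d)`, then `β_* = 1/4 − 1/(8√(d−2)) − O((d−2)^{−3/2})` as `d → ∞`:
there are constants `C, d_0` with
`|β_* − 1/4 + 1/(8√(d−2))| ≤ C(d−2)^{−3/2}` for all `d ≥ d_0`. -/
theorem beta_star_asymptotics :
    ∃ C : ℝ, ∃ d0 : ℕ, ∀ d : ℕ, d0 ≤ d → ∀ x : ℝ, x ∈ Set.Ioo (0 : ℝ) 1 →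
      Real.sqrt (1 - x / ((d : ℝ) - 2)) +
          (((d : ℝ) - 1) / ((d : ℝ) - 2)) * (Real.sqrt (1 - x / ((d : ℝ) - 2)))⁻¹ +
          (Real.sqrt x - (Real.sqrt x)⁻¹) / Real.sqrt ((d : ℝ) - 2) - 2 = 0 →
      |(x / 2) / (1 + x) - 1 / 4 + 1 / (8 * Real.sqrt ((d : ℝ) - 2))| ≤
        C * ((d : ℝ) - 2) ^ (-(3 : ℝ) / 2) := by
  refine ⟨10, 11, ?_⟩
  intro d hd x hx heq
  obtain ⟨hx0, hx1⟩ := hx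
  set t : ℝ := (d : ℝ) - 2 with ht_def
  set st : ℝ := Real.sqrt t with hst_def
  set sx : ℝ := Real.sqrt x with hsx_def
  set w : ℝ := Real.sqrt (1 - x / t) with hw_def
  have hd11 : (11:ℝ) ≤ (d:ℝ) := by exact_mod_cast hd
  have ht9 : (9:ℝ) ≤ t := by rw [ht_def]; linarith
  have ht0 : (0:ℝ) < t := by linarith
  have hst2 : st ^ 2 = t := by rw [hst_def]; exact Real.sq_sqrt ht0.le
  have hst3 : (3:ℝ) ≤ st := by
    have h := Real.sqrt_le_sqrt ht9
    rw [show (9:ℝ) = 3^2 by norm_num, Real.sqrt_sq (by norm_num : (0:ℝ) ≤ 3)] at h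
    rw [hst_def]; exact h
  have hst0 : (0:ℝ) < st := by linarith
  have hsx2 : sx ^ 2 = x := by rw [hsx_def]; exact Real.sq_sqrt hx0.le
  have hsx0 : 0 < sx := by rw [hsx_def]; exact Real.sqrt_pos.mpr hx0
  have hsx1 : sx ≤ 1 := by nlinarith
  have hu1 : x / t < 1/9 := by rw [div_lt_iff₀ ht0]; nlinarith
  have hu0 : 0 < x / t := div_pos hx0 ht0
  have hw2 : w ^ 2 = 1 - x / t := by
    rw [hw_def]; exact Real.sq_sqrt (by linarith)
  have hw0 : 0 < w := by rw [hw_def]; exact Real.sqrt_pos.mpr (by linarith)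
  clear_value t st sx w
  have hw1 : w ≤ 1 := by nlinarith
  have hwl : 1 - x / t ≤ w := by nlinarith
  have hxt : t * (x / t) = x := by field_simp
  have h1w : t * (1 - w) ≤ 1 := by
    nlinarith [mul_le_mul_of_nonneg_left hwl ht0.le, hxt]
  have h1w0 : 0 ≤ 1 - w := by linarith
  -- key polynomial relation from the equation
  have key : (1 - sx^2) * w * t = sx * st * (t * (1 - w)^2 + 1) := by
    have h1 : w ≠ 0 := ne_of_gt hw0
    have h2 : t ≠ 0 := ne_of_gt ht0
    have h3 : st ≠ 0 := ne_of_gt hst0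
    have h4 : sx ≠ 0 := ne_of_gt hsx0
    field_simp at heq
    linear_combination (-1) * heq - sx * st * ht_def
  have ha_eq : (1 - x)/sx = st * (t*(1-w)^2 + 1) / (w * t) := by
    rw [div_eq_div_iff (ne_of_gt hsx0) (ne_of_gt (mul_pos hw0 ht0))]
    linear_combination key + w * t * hsx2
  have hr0 : 1/st ≤ (1-x)/sx := by
    rw [ha_eq, div_le_div_iff₀ hst0 (mul_pos hw0 ht0)]
    have e : st * (t*(1-w)^2 + 1) * st = t*(t*(1-w)^2) + t := by
      linear_combination (t*(1-w)^2 + 1) * hst2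
    nlinarith [e, mul_nonneg (mul_nonneg ht0.le ht0.le) (sq_nonneg (1-w)), hw1, ht0]
  have hr4 : (1-x)/sx ≤ 1/st + 4/(t*st) := by
    have hsum : 1/st + 4/(t*st) = (t+4)/(t*st) := by field_simp
    rw [ha_eq, hsum, div_le_div_iff₀ (mul_pos hw0 ht0) (mul_pos ht0 hst0)]
    have e2 : st * (t*(1-w)^2 + 1) * (t*st) = t*(t*(1-w))^2 + t*t := by
      linear_combination (t*(t*(1-w)^2 + 1)) * hst2
    have hz0 : 0 ≤ t*(1-w) := mul_nonneg ht0.le h1w0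
    have hz2 : t*(t*(1-w))^2 ≤ t := by nlinarith [h1w, hz0, ht0]
    nlinarith [e2, hz2, h1w, ht9, hz0]
  have ha2 : (1-x)/sx ≤ 1/2 := by
    have e1 : 1/st ≤ 1/3 := by
      rw [div_le_div_iff₀ hst0 (by norm_num : (0:ℝ) < 3)]; linarith
    have e2 : 4/(t*st) ≤ 4/27 := by
      rw [div_le_div_iff₀ (mul_pos ht0 hst0) (by norm_num : (0:ℝ) < 27)]
      nlinarith
    linarith
  have h1mx : 1 - x = ((1-x)/sx) * sx := by field_simp
  have hx_half : 1/2 ≤ x := by nlinarith [ha2, hsx1, hsx0.le, h1mx]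
  have hsx_half : 1/2 ≤ sx := by nlinarith [hsx2, hx_half, hsx0]
  have h1mx2 : 1 - x ≤ 2/st := by
    have e3 : 4/(t*st) ≤ 1/st := by
      rw [div_le_div_iff₀ (mul_pos ht0 hst0) hst0]; nlinarith
    have e4 : (1-x)/sx ≤ 2/st := by
      have : 1/st + 1/st = 2/st := by ring
      linarith
    have hann : 0 ≤ (1-x)/sx := le_trans (by positivity) hr0
    calc 1 - x = ((1-x)/sx)*sx := h1mx
      _ ≤ ((1-x)/sx)*1 := mul_le_mul_of_nonneg_left hsx1 hann
      _ ≤ 2/st := by linarith [e4]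
  have h1p : (0:ℝ) < 1 + x := by linarith
  -- the central algebraic identity
  have hid : x/2/(1+x) - 1/4 + 1/(8*st) =
      -((1-x)/sx - 1/st)/8 + (1-x)*(1-sx)^2/(8*sx*(1+x)) := by
    rw [← hsx2]
    have h4 : sx ≠ 0 := ne_of_gt hsx0
    have h5 : (1:ℝ) + sx^2 ≠ 0 := by positivity
    have h3 : st ≠ 0 := ne_of_gt hst0
    field_simp
    ring
  have hsxx : x ≤ sx := by
    have : sx*sx ≤ sx*1 := mul_le_mul_of_nonneg_left hsx1 hsx0.le
    nlinarith [this, hsx2]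
  -- prune the context before the heavy final estimates
  clear heq key ha_eq hw2 hwl hxt h1w h1w0 hu1 hu0 hw1 hw0 hw_def
  clear w hd hd11 ht_def hst_def hsx_def hst3
  set P : ℝ := t * st with hP_def
  clear_value P
  have hP : 0 < P := by rw [hP_def]; exact mul_pos ht0 hst0
  have hrP : ((1-x)/sx - 1/st) * P ≤ 4 := by
    have e5 : (1-x)/sx - 1/st ≤ 4/P := by linarith [hr4]
    calc ((1-x)/sx - 1/st) * P ≤ (4/P) * P := mul_le_mul_of_nonneg_right e5 hP.le
      _ = 4 := by field_simp
  have hrnn : 0 ≤ (1-x)/sx - 1/st := by linarith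
  have h8 : (0:ℝ) < 8*sx*(1+x) :=
    mul_pos (mul_pos (by norm_num : (0:ℝ) < 8) hsx0) h1p
  have hTnn : 0 ≤ (1-x)*(1-sx)^2/(8*sx*(1+x)) :=
    div_nonneg (mul_nonneg (by linarith : (0:ℝ) ≤ 1-x) (sq_nonneg (1-sx))) h8.le
  have hq : st * (1-x) ≤ 2 := by
    have h6 := mul_le_mul_of_nonneg_left h1mx2 hst0.le
    have h7 : st * (2/st) = 2 := by field_simp
    linarith [h6, h7]
  have hTP : ((1-x)*(1-sx)^2/(8*sx*(1+x))) * P ≤ 2 := by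
    rw [hP_def, div_mul_eq_mul_div, div_le_iff₀ h8]
    have h1sx : (1-sx)^2 ≤ (1-x)^2 := by nlinarith [hsxx, hx1, hsx1]
    have c1 : (1-x)*(1-sx)^2*(t*st) ≤ (1-x)*((1-x)^2)*(t*st) := by
      apply mul_le_mul_of_nonneg_right ?_ (mul_pos ht0 hst0).le
      exact mul_le_mul_of_nonneg_left h1sx (by linarith)
    have c3 : (1-x)*((1-x)^2)*(t*st) = (st*(1-x))^3 := by
      linear_combination (-(1-x)^3*st) * hst2
    have hz0 : 0 ≤ st*(1-x) := mul_nonneg hst0.le (by linarith)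
    have hcube : (st*(1-x))^3 ≤ 8 := by
      nlinarith [hq, hz0, sq_nonneg (st*(1-x))]
    have c4 : (1/2)*(1:ℝ) ≤ sx*(1+x) :=
      mul_le_mul hsx_half (by linarith) (by norm_num) (by linarith)
    linarith [c1, c3, hcube, c4]
  -- rewrite the rpow
  have hpow : (10:ℝ) * t ^ (-(3:ℝ)/2) = 10 / P := by
    rw [show (-(3:ℝ)/2) = -(3/2) by ring, Real.rpow_neg ht0.le,
      show ((3:ℝ)/2) = 1 + 1/2 by ring, Real.rpow_add ht0, Real.rpow_one,
      ← Real.sqrt_eq_rpow]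
    rw [hP_def, hst2.symm]
    rw [Real.sqrt_sq hst0.le]
    ring
  rw [hpow, hid, abs_le]
  have m1 := mul_nonneg hrnn hP.le
  have m2 := mul_nonneg hTnn hP.le
  constructor
  · rw [neg_le, show -(-((1-x)/sx - 1/st)/8 + (1-x)*(1-sx)^2/(8*sx*(1+x))) =
      ((1-x)/sx - 1/st)/8 - (1-x)*(1-sx)^2/(8*sx*(1+x)) by ring, le_div_iff₀ hP]
    nlinarith [hrP, hTP, m1, m2]
  · rw [le_div_iff₀ hP]
    nlinarith [hrP, hTP, m1, m2]
end

section
/- Let Ext: {0,1}^n × U → {0,1}^ℓ be a universal hash family, i.e., for all x ≠ y in {0,1}^n, Pr_{u←U}[Ext(x,u) = Ext(y,u)] ≤ 2^{−ℓ}. For each x let σ_x be a positive semidefinite operator with tr σ_x = 1 on a fixed Hilbert space, and define ω(z,u) = 2^{ℓ−n} Σ_{x: Ext(x,u)=z} σ_x and ω_av = 2^{−n} Σ_x σ_x. Then E_{z,u}[(ω(z,u) − ω_av)²] ≤ ((2^ℓ − 1)/2^n)·(2^{−n} Σ_x σ_x²) ... specializing to product form: if σ_x = ⊗_{i=1}^n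 τ_{x_i} with τ_0, τ_1 fixed density operators, then E_{z,u}[(ω(z,u) − ω_av)²] = ((2^ℓ−1)/2^n)·⊗_{i=1}^n (τ_0² + τ_1²)/2. -/
open ComplexOrder

open Finset in
private theorem aux_hash {U : Type*} [Fintype U] [Nonempty U] [DecidableEq U]
    (n l m : ℕ)
    (Ext : (Fin n → Bool) → U → (Fin l → Bool))
    (hExt : ∀ x y : Fin n → Bool, x ≠ y →
      ((Finset.univ.filter fun u : U => Ext x u = Ext y u).card : ℝ) / (Fintype.card U) =
        (2 : ℝ) ^ (-(l : ℤ)))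
    (τ : Bool → Matrix (Fin m) (Fin m) ℂ)
    (σ : (Fin n → Bool) → Matrix (Fin n → Fin m) (Fin n → Fin m) ℂ)
    (hσ : ∀ x, σ x = Matrix.of fun i j => ∏ t, τ (x t) (i t) (j t))
    (ω : (Fin l → Bool) → U → Matrix (Fin n → Fin m) (Fin n → Fin m) ℂ)
    (hω : ∀ z u, ω z u = ((2 : ℂ) ^ l / 2 ^ n) •
        ∑ x ∈ Finset.univ.filter (fun x => Ext x u = z), σ x)
    (ωav : Matrix (Fin n → Fin m) (Fin n → Fin m) ℂ)
    (hωav : ωav = ((2 : ℂ) ^ n)⁻¹ • ∑ x, σ x) :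
    ((2 : ℂ) ^ l * Fintype.card U)⁻¹ •
        ∑ z : Fin l → Bool, ∑ u : U, (ω z u - ωav) * (ω z u - ωav) =
      (((2 : ℂ) ^ l - 1) / 2 ^ n) •
        Matrix.of (fun i j =>
          ∏ t, ((2 : ℂ)⁻¹ • (τ false * τ false + τ true * τ true)) (i t) (j t)) := by
  classical
  have hc0 : ((2:ℂ)^l) ≠ 0 := pow_ne_zero _ two_ne_zero
  have hd0 : ((2:ℂ)^n) ≠ 0 := pow_ne_zero _ two_ne_zero
  have hU0 : ((Fintype.card U : ℂ)) ≠ 0 := Nat.cast_ne_zero.mpr Fintype.card_ne_zero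
  -- product of two product states
  have hmul : ∀ x y : Fin n → Bool, σ x * σ y =
      Matrix.of fun i j => ∏ t, (τ (x t) * τ (y t)) (i t) (j t) := by
    intro x y
    ext i j
    simp only [hσ, Matrix.mul_apply, Matrix.of_apply, ← Finset.prod_mul_distrib]
    rw [Fintype.prod_sum fun t k => τ (x t) (i t) k * τ (y t) k (j t)]
  -- sum of squares is a product state
  have hS : (∑ x : Fin n → Bool, σ x * σ x) =
      Matrix.of fun i j => ∏ t, (τ false * τ false + τ true * τ true) (i t) (j t) := by
    ext i j
    simp only [Matrix.sum_apply, hmul, Matrix.of_apply]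
    rw [show (∏ t, (τ false * τ false + τ true * τ true) (i t) (j t))
        = ∏ t, ∑ b : Bool, (τ b * τ b) (i t) (j t) from
      Finset.prod_congr rfl fun t _ => by simp [Fintype.sum_bool, add_comm]]
    rw [Fintype.prod_sum fun t b => (τ b * τ b) (i t) (j t)]
  -- the RHS matrix
  have hRHS : (Matrix.of (fun i j =>
          ∏ t, ((2 : ℂ)⁻¹ • (τ false * τ false + τ true * τ true)) (i t) (j t))
        : Matrix (Fin n → Fin m) (Fin n → Fin m) ℂ)
      = ((2:ℂ)⁻¹)^n • ∑ x : Fin n → Bool, σ x * σ x := by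
    rw [hS]
    ext i j
    simp only [Matrix.of_apply, Matrix.smul_apply, Matrix.smul_apply, smul_eq_mul]
    rw [Finset.prod_mul_distrib]
    simp [Finset.prod_const]
  -- collision counts
  have hN : ∀ x y : Fin n → Bool, y ≠ x →
      ((univ.filter fun u : U => Ext y u = Ext x u).card : ℂ)
        = (Fintype.card U : ℂ) / 2^l := by
    intro x y hyx
    have h := hExt y x hyx
    rw [zpow_neg, zpow_natCast] at h
    have hUR : ((Fintype.card U : ℝ)) ≠ 0 := Nat.cast_ne_zero.mpr Fintype.card_ne_zero
    rw [div_eq_iff hUR] at h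
    have h2 : ((univ.filter fun u : U => Ext y u = Ext x u).card : ℝ)
        = (Fintype.card U : ℝ) / 2^l := by rw [h]; ring
    calc ((univ.filter fun u : U => Ext y u = Ext x u).card : ℂ)
        = (((univ.filter fun u : U => Ext y u = Ext x u).card : ℝ) : ℂ) := by norm_cast
      _ = (((Fintype.card U : ℝ) / 2^l : ℝ) : ℂ) := by rw [h2]
      _ = (Fintype.card U : ℂ) / 2^l := by push_cast; ring
  -- sum over z of ω
  have hsum_z : ∀ u, ∑ z, ω z u = ((2:ℂ)^l / 2^n) • ∑ x, σ x := by
    intro u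
    simp only [hω]
    rw [← Finset.smul_sum, Finset.sum_fiberwise]
  -- sum over z of ω²
  have hω2 : ∀ u, ∑ z, ω z u * ω z u
      = ((2:ℂ)^l / 2^n * ((2:ℂ)^l / 2^n)) •
        ∑ x : Fin n → Bool, ∑ y ∈ univ.filter (fun y => Ext y u = Ext x u), σ x * σ y := by
    intro u
    simp only [hω, smul_mul_smul_comm]
    rw [← Finset.smul_sum]
    congr 1
    calc ∑ z, (∑ x ∈ univ.filter (fun x => Ext x u = z), σ x) *
              (∑ y ∈ univ.filter (fun y => Ext y u = z), σ y)
        = ∑ z, ∑ x ∈ univ.filter (fun x => Ext x u = z),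
            ∑ y ∈ univ.filter (fun y => Ext y u = Ext x u), σ x * σ y := by
          refine Finset.sum_congr rfl fun z _ => ?_
          rw [Finset.sum_mul_sum]
          refine Finset.sum_congr rfl fun x hx => ?_
          rw [Finset.mem_filter] at hx
          rw [hx.2]
      _ = _ := Finset.sum_fiberwise _ _ _
  -- the key collision computation
  have hcount : ∑ u : U, ∑ x : Fin n → Bool,
      ∑ y ∈ univ.filter (fun y => Ext y u = Ext x u), σ x * σ y
      = ((Fintype.card U : ℂ) / 2^l) • ((∑ x, σ x) * (∑ x, σ x))
        + ((Fintype.card U : ℂ) - (Fintype.card U : ℂ)/2^l) • ∑ x, σ x * σ x := by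
    rw [Finset.sum_comm]
    have step1 : ∀ x : Fin n → Bool,
        ∑ u : U, ∑ y ∈ univ.filter (fun y => Ext y u = Ext x u), σ x * σ y
        = ∑ y : Fin n → Bool,
            ((univ.filter fun u : U => Ext y u = Ext x u).card : ℂ) • (σ x * σ y) := by
      intro x
      simp only [Finset.sum_filter]
      rw [Finset.sum_comm]
      refine Finset.sum_congr rfl fun y _ => ?_
      rw [← Finset.sum_filter, Finset.sum_const]
      exact (Nat.cast_smul_eq_nsmul ℂ _ _).symm
    have step2 : ∀ x : Fin n → Bool,
        ∑ y : Fin n → Bool,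
            ((univ.filter fun u : U => Ext y u = Ext x u).card : ℂ) • (σ x * σ y)
        = ((Fintype.card U : ℂ)/2^l) • (σ x * ∑ y, σ y)
          + ((Fintype.card U : ℂ) - (Fintype.card U : ℂ)/2^l) • (σ x * σ x) := by
      intro x
      have key : ∀ y : Fin n → Bool,
          ((univ.filter fun u : U => Ext y u = Ext x u).card : ℂ) • (σ x * σ y)
          = ((Fintype.card U : ℂ)/2^l) • (σ x * σ y)
            + (if y = x then
                ((Fintype.card U : ℂ) - (Fintype.card U : ℂ)/2^l) • (σ x * σ y) else 0) := by
        intro y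
        by_cases hyx : y = x
        · subst hyx
          rw [if_pos rfl, ← add_smul]
          have he : (univ.filter fun u : U => Ext y u = Ext y u) = univ := by simp
          rw [he, Finset.card_univ]
          congr 1
          ring
        · rw [hN x y hyx, if_neg hyx, add_zero]
      rw [Finset.sum_congr rfl fun y _ => key y, Finset.sum_add_distrib,
        ← Finset.smul_sum, ← Finset.mul_sum, Finset.sum_ite_eq' univ x]
      simp
    calc ∑ x : Fin n → Bool, ∑ u : U,
          ∑ y ∈ univ.filter (fun y => Ext y u = Ext x u), σ x * σ y
        = ∑ x : Fin n → Bool,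
            (((Fintype.card U : ℂ)/2^l) • (σ x * ∑ y, σ y)
              + ((Fintype.card U : ℂ) - (Fintype.card U : ℂ)/2^l) • (σ x * σ x)) := by
          refine Finset.sum_congr rfl fun x _ => ?_
          rw [step1 x, step2 x]
      _ = _ := by
          rw [Finset.sum_add_distrib, ← Finset.smul_sum, ← Finset.smul_sum, ← Finset.sum_mul]
  -- per-u expansion
  have hper : ∀ u, ∑ z, (ω z u - ωav) * (ω z u - ωav)
      = (∑ z, ω z u * ω z u)
        - ((2:ℂ)^l / 2^n * ((2:ℂ)^n)⁻¹) • ((∑ x, σ x) * (∑ x, σ x))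
        - (((2:ℂ)^n)⁻¹ * ((2:ℂ)^l / 2^n)) • ((∑ x, σ x) * (∑ x, σ x))
        + ((2:ℂ)^l * (((2:ℂ)^n)⁻¹ * ((2:ℂ)^n)⁻¹)) • ((∑ x, σ x) * (∑ x, σ x)) := by
    intro u
    have e1 : ∑ z, ω z u * ωav
        = ((2:ℂ)^l / 2^n * ((2:ℂ)^n)⁻¹) • ((∑ x, σ x) * (∑ x, σ x)) := by
      rw [← Finset.sum_mul, hsum_z u, hωav, smul_mul_smul_comm]
    have e2 : ∑ _z : Fin l → Bool, ωav * ω _z u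
        = (((2:ℂ)^n)⁻¹ * ((2:ℂ)^l / 2^n)) • ((∑ x, σ x) * (∑ x, σ x)) := by
      rw [← Finset.mul_sum, hsum_z u, hωav, smul_mul_smul_comm]
    have e3 : ∑ _z : Fin l → Bool, ωav * ωav
        = ((2:ℂ)^l * (((2:ℂ)^n)⁻¹ * ((2:ℂ)^n)⁻¹)) • ((∑ x, σ x) * (∑ x, σ x)) := by
      rw [Finset.sum_const, Finset.card_univ, hωav, smul_mul_smul_comm,
        show Fintype.card (Fin l → Bool) = 2^l from by simp,
        ← Nat.cast_smul_eq_nsmul ℂ, smul_smul]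
      push_cast
      ring_nf
    calc ∑ z, (ω z u - ωav) * (ω z u - ωav)
        = ∑ z, (ω z u * ω z u - ω z u * ωav - ωav * ω z u + ωav * ωav) := by
          refine Finset.sum_congr rfl fun z _ => ?_
          noncomm_ring
      _ = (∑ z, ω z u * ω z u) - (∑ z, ω z u * ωav) - (∑ z, ωav * ω z u)
            + ∑ _z : Fin l → Bool, ωav * ωav := by
          rw [Finset.sum_add_distrib, Finset.sum_sub_distrib, Finset.sum_sub_distrib]
      _ = _ := by rw [e1, e2, e3]
  -- total sum
  have total : ∑ u : U, ∑ z, (ω z u - ωav) * (ω z u - ωav)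
      = ((2:ℂ)^l / 2^n * ((2:ℂ)^l / 2^n)) •
          (((Fintype.card U : ℂ) / 2^l) • ((∑ x, σ x) * (∑ x, σ x))
            + ((Fintype.card U : ℂ) - (Fintype.card U : ℂ)/2^l) • ∑ x, σ x * σ x)
        - (Fintype.card U : ℂ) •
            (((2:ℂ)^l / 2^n * ((2:ℂ)^n)⁻¹) • ((∑ x, σ x) * (∑ x, σ x)))
        - (Fintype.card U : ℂ) •
            ((((2:ℂ)^n)⁻¹ * ((2:ℂ)^l / 2^n)) • ((∑ x, σ x) * (∑ x, σ x)))
        + (Fintype.card U : ℂ) •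
            (((2:ℂ)^l * (((2:ℂ)^n)⁻¹ * ((2:ℂ)^n)⁻¹)) • ((∑ x, σ x) * (∑ x, σ x))) := by
    rw [Finset.sum_congr rfl fun u _ => hper u]
    rw [Finset.sum_add_distrib, Finset.sum_sub_distrib, Finset.sum_sub_distrib]
    rw [Finset.sum_const, Finset.sum_const, Finset.sum_const, Finset.card_univ]
    simp only [← Nat.cast_smul_eq_nsmul ℂ]
    rw [show ∑ u : U, ∑ z, ω z u * ω z u
        = ((2:ℂ)^l / 2^n * ((2:ℂ)^l / 2^n)) •
          ∑ u : U, ∑ x : Fin n → Bool,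
            ∑ y ∈ univ.filter (fun y => Ext y u = Ext x u), σ x * σ y from by
      rw [Finset.sum_congr rfl fun u _ => hω2 u, ← Finset.smul_sum]]
    rw [hcount]
  -- finish
  rw [Finset.sum_comm, total, hRHS, inv_pow]
  match_scalars
  · ring_nf
    field_simp
    simp only [one_div, inv_pow]
    field_simp
    ring
  · ring_nf
    field_simp
    simp only [one_div, inv_pow]
    field_simp
    ring


/-- for a universal hash family `Ext` (collision probability exactly `2^{−ℓ}`
for distinct inputs) and product states `σ_x = τ_{x_1} ⊗ ⋯ ⊗ τ_{x_n}`, with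
`ω(z,u) = 2^{ℓ−n} Σ_{x : Ext(x,u)=z} σ_x` and `ω_av = 2^{−n} Σ_x σ_x`, one has
`E_{z,u}[(ω(z,u) − ω_av)²] = ((2^ℓ−1)/2^n)·⊗_{i=1}^n (τ_0² + τ_1²)/2`. -/
theorem universal_hash_second_moment {U : Type*} [Fintype U] [Nonempty U] [DecidableEq U]
    (n l m : ℕ)
    (Ext : (Fin n → Bool) → U → (Fin l → Bool))
    (hExt : ∀ x y : Fin n → Bool, x ≠ y →
      ((Finset.univ.filter fun u : U => Ext x u = Ext y u).card : ℝ) / (Fintype.card U) =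
        (2 : ℝ) ^ (-(l : ℤ)))
    (τ : Bool → Matrix (Fin m) (Fin m) ℂ)
    (hτpsd : ∀ b, (τ b).PosSemidef) (hτtr : ∀ b, (τ b).trace = 1) :
    let σ : (Fin n → Bool) → Matrix (Fin n → Fin m) (Fin n → Fin m) ℂ :=
      fun x => Matrix.of fun i j => ∏ t, τ (x t) (i t) (j t)
    let ω : (Fin l → Bool) → U → Matrix (Fin n → Fin m) (Fin n → Fin m) ℂ :=
      fun z u => ((2 : ℂ) ^ l / 2 ^ n) •
        ∑ x ∈ Finset.univ.filter (fun x => Ext x u = z), σ x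
    let ωav : Matrix (Fin n → Fin m) (Fin n → Fin m) ℂ := ((2 : ℂ) ^ n)⁻¹ • ∑ x, σ x
    ((2 : ℂ) ^ l * Fintype.card U)⁻¹ •
        ∑ z : Fin l → Bool, ∑ u : U, (ω z u - ωav) * (ω z u - ωav) =
      (((2 : ℂ) ^ l - 1) / 2 ^ n) •
        Matrix.of (fun i j =>
          ∏ t, ((2 : ℂ)⁻¹ • (τ false * τ false + τ true * τ true)) (i t) (j t)) := by
  intro σ ω ωav
  exact aux_hash n l m Ext hExt τ σ (fun _ => rfl) ω (fun _ _ => rfl) ωav rfl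
end

section
/- Let A be a Hermitian operator on a finite-dimensional Hilbert space and let {A_i} be Hermitian-operator-valued random variables with A = E[A_i] in the sense of a finite average. Then E‖A_i‖_1 = E tr√(A_i²) ≤ tr√(E[A_i²]), i.e., the expected trace norm of Hermitian random matrices is at most the trace of the square root of the expected square. -/
open ComplexOrder Matrix

set_option linter.unusedSectionVars false

section AuxExpectedTraceNorm
variable {n : Type*} [Fintype n] [DecidableEq n]

lemma trace_conjTranspose_mul_re (X Y : Matrix n n ℂ) :
    (Xᴴ * Y).trace.re = ∑ b, ∑ a, ((starRingEnd ℂ) (X a b) * Y a b).re := by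
  simp [Matrix.trace, Matrix.mul_apply, Matrix.diag, Matrix.conjTranspose_apply,
    Complex.re_sum]

lemma trace_conjTranspose_mul_self_re (X : Matrix n n ℂ) :
    (Xᴴ * X).trace.re = ∑ b, ∑ a, ‖X a b‖ ^ 2 := by
  rw [trace_conjTranspose_mul_re]
  congr 1; ext b; congr 1; ext a
  rw [mul_comm, Complex.mul_conj]
  simp [Complex.sq_norm]

lemma trace_conjTranspose_mul_self_nonneg (X : Matrix n n ℂ) :
    0 ≤ (Xᴴ * X).trace.re := by
  rw [trace_conjTranspose_mul_self_re]
  positivity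

lemma trace_cauchy_schwarz (X Y : Matrix n n ℂ) :
    (Xᴴ * Y).trace.re ≤ Real.sqrt ((Xᴴ * X).trace.re * (Yᴴ * Y).trace.re) := by
  have h1 : (Xᴴ * Y).trace.re ≤ ∑ b, ∑ a, ‖X a b‖ * ‖Y a b‖ := by
    rw [trace_conjTranspose_mul_re]
    refine Finset.sum_le_sum fun b _ => Finset.sum_le_sum fun a _ => ?_
    calc ((starRingEnd ℂ) (X a b) * Y a b).re ≤ ‖(starRingEnd ℂ) (X a b) * Y a b‖ :=
          Complex.re_le_norm _
      _ = ‖X a b‖ * ‖Y a b‖ := by simp [_root_.map_mul]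
  have h2 : (∑ b, ∑ a, ‖X a b‖ * ‖Y a b‖) ^ 2 ≤
      (Xᴴ * X).trace.re * (Yᴴ * Y).trace.re := by
    rw [trace_conjTranspose_mul_self_re, trace_conjTranspose_mul_self_re]
    have h := Finset.sum_mul_sq_le_sq_mul_sq (Finset.univ ×ˢ (Finset.univ : Finset n))
      (fun q => ‖X q.2 q.1‖) (fun q => ‖Y q.2 q.1‖)
    rw [Finset.sum_product, Finset.sum_product, Finset.sum_product] at h
    exact h
  calc (Xᴴ * Y).trace.re ≤ ∑ b, ∑ a, ‖X a b‖ * ‖Y a b‖ := h1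
    _ = Real.sqrt ((∑ b, ∑ a, ‖X a b‖ * ‖Y a b‖) ^ 2) := by
        rw [Real.sqrt_sq (by positivity)]
    _ ≤ _ := Real.sqrt_le_sqrt h2

lemma conj_trace_eq {V D : Matrix n n ℂ} (h : star V * V = 1) :
    (V * D * star V).trace = D.trace := by
  rw [trace_mul_cycle, h, Matrix.one_mul]

lemma conj_mul_conj {V D₁ D₂ : Matrix n n ℂ} (h : star V * V = 1) :
    (V * D₁ * star V) * (V * D₂ * star V) = V * (D₁ * D₂) * star V := by
  simp only [Matrix.mul_assoc]
  rw [← Matrix.mul_assoc (star V) V (D₂ * star V), h, Matrix.one_mul]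

lemma conj_hermitian {V D : Matrix n n ℂ} (hD : D.IsHermitian) :
    (V * D * star V).IsHermitian := by
  have := Matrix.isHermitian_mul_mul_conjTranspose V hD
  rwa [Matrix.star_eq_conjTranspose]

lemma exists_abs_matrix (A : Matrix n n ℂ) (hA : A.IsHermitian) :
    ∃ B : Matrix n n ℂ, B.IsHermitian ∧ B * B = A * A ∧
      B.trace = ((∑ j, |hA.eigenvalues j| : ℝ) : ℂ) := by
  set V : Matrix n n ℂ := (hA.eigenvectorUnitary : Matrix n n ℂ) with hV
  have hV1 : star V * V = 1 := mem_unitaryGroup_iff'.mp hA.eigenvectorUnitary.2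
  set D : Matrix n n ℂ := diagonal (fun j => ((|hA.eigenvalues j| : ℝ) : ℂ)) with hD
  refine ⟨V * D * star V, ?_, ?_, ?_⟩
  · refine conj_hermitian (isHermitian_diagonal_iff.mpr fun i => ?_)
    exact Complex.conj_ofReal _
  · rw [conj_mul_conj hV1]
    conv_rhs => rw [show A = V * diagonal (fun j => ((hA.eigenvalues j : ℝ) : ℂ)) * star V from hA.spectral_theorem]
    rw [conj_mul_conj hV1]
    refine congrArg (fun M => V * M * star V) ?_
    rw [diagonal_mul_diagonal, diagonal_mul_diagonal]
    refine congrArg diagonal (funext fun j => ?_)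
    show ((|hA.eigenvalues j| : ℝ) : ℂ) * ((|hA.eigenvalues j| : ℝ) : ℂ) = _
    rw [← Complex.ofReal_mul, abs_mul_abs_self]
    show _ = ((hA.eigenvalues j : ℝ) : ℂ) * ((hA.eigenvalues j : ℝ) : ℂ)
    rw [← Complex.ofReal_mul]
  · rw [conj_trace_eq hV1, hD, trace_diagonal]
    push_cast
    rfl

lemma eps_facts (T : Matrix n n ℂ) (hT : T.PosSemidef) {ε : ℝ} (hε : 0 < ε) :
    IsUnit (T + (ε : ℂ) • 1).det ∧
      ((T + (ε : ℂ) • 1)⁻¹ * (T * T)).trace.re ≤ T.trace.re ∧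
      (T + (ε : ℂ) • 1).trace.re = T.trace.re + ε * Fintype.card n ∧
      0 ≤ T.trace.re := by
  set μ := hT.1.eigenvalues with hμdef
  have hμ : ∀ j, 0 ≤ μ j := hT.eigenvalues_nonneg
  set V : Matrix n n ℂ := (hT.1.eigenvectorUnitary : Matrix n n ℂ) with hV
  have hV1 : star V * V = 1 := mem_unitaryGroup_iff'.mp hT.1.eigenvectorUnitary.2
  have hV2 : V * star V = 1 := mem_unitaryGroup_iff.mp hT.1.eigenvectorUnitary.2
  have hspec : T = V * diagonal (fun j => ((μ j : ℝ) : ℂ)) * star V := hT.1.spectral_theorem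
  have hone : (1 : Matrix n n ℂ) = V * 1 * star V := by rw [Matrix.mul_one, hV2]
  have hE : T + (ε : ℂ) • 1 = V * diagonal (fun j => ((μ j + ε : ℝ) : ℂ)) * star V := by
    conv_lhs => rw [hspec, hone]
    have hsm : (ε : ℂ) • (V * 1 * star V) = V * ((ε : ℂ) • 1) * star V := by
      rw [Matrix.mul_smul, Matrix.smul_mul]
    rw [hsm, ← Matrix.add_mul, ← Matrix.mul_add]
    congr 2
    ext i j
    by_cases h : i = j <;>
      simp [Matrix.diagonal_apply, h, Matrix.one_apply, Complex.ofReal_add]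
  have hMinv : (T + (ε : ℂ) • 1) * (V * diagonal (fun j => (((μ j + ε : ℝ) : ℂ))⁻¹) * star V)
      = 1 := by
    rw [hE, conj_mul_conj hV1, diagonal_mul_diagonal]
    have : (fun j => ((μ j + ε : ℝ) : ℂ) * (((μ j + ε : ℝ) : ℂ))⁻¹) = fun _ => (1 : ℂ) := by
      funext j
      have h0 : (0:ℝ) < μ j + ε := by have := hμ j; positivity
      rw [mul_inv_cancel₀ (by exact_mod_cast h0.ne')]
    rw [this, Matrix.diagonal_one, Matrix.mul_one, hV2]
  have hdet : IsUnit (T + (ε : ℂ) • 1).det := Matrix.isUnit_det_of_right_inverse hMinv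
  have hinv : (T + (ε : ℂ) • 1)⁻¹ = V * diagonal (fun j => (((μ j + ε : ℝ) : ℂ))⁻¹) * star V :=
    Matrix.inv_eq_right_inv hMinv
  have hTtr : T.trace = ((∑ j, μ j : ℝ) : ℂ) := by
    rw [hspec, conj_trace_eq hV1, trace_diagonal]
    push_cast; rfl
  refine ⟨hdet, ?_, ?_, ?_⟩
  · have hTT : T * T = V * diagonal (fun j => ((μ j * μ j : ℝ) : ℂ)) * star V := by
      conv_lhs => rw [hspec]
      rw [conj_mul_conj hV1, diagonal_mul_diagonal]
      refine congrArg (fun M => V * M * star V) (congrArg diagonal (funext fun j => ?_))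
      push_cast; ring
    rw [hinv, hTT, conj_mul_conj hV1, conj_trace_eq hV1, diagonal_mul_diagonal, trace_diagonal]
    have : ∀ j, ((((μ j + ε : ℝ) : ℂ))⁻¹ * ((μ j * μ j : ℝ) : ℂ)) =
        (((μ j + ε)⁻¹ * (μ j * μ j) : ℝ) : ℂ) := by
      intro j; push_cast; ring
    simp only [this]
    rw [hTtr]
    rw [← Complex.ofReal_sum, Complex.ofReal_re, Complex.ofReal_re]
    refine Finset.sum_le_sum fun j _ => ?_
    have h1 : 0 < μ j + ε := by have := hμ j; positivity
    rw [inv_mul_le_iff₀ h1]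
    nlinarith [hμ j]
  · rw [Matrix.trace_add, Matrix.trace_smul, Matrix.trace_one]
    simp [Complex.add_re, Complex.ofReal_re, mul_comm]
  · rw [hTtr, Complex.ofReal_re]
    exact Finset.sum_nonneg fun j _ => hμ j

section aux

lemma psd_sqrt_facts (M : Matrix n n ℂ) (hM : M.PosSemidef) :
    ((hM.1.eigenvectorUnitary : Matrix n n ℂ) *
      Matrix.diagonal (((↑) : ℝ → ℂ) ∘ (√·) ∘ hM.1.eigenvalues) *
      (star hM.1.eigenvectorUnitary : Matrix n n ℂ)).PosSemidef ∧
    ((hM.1.eigenvectorUnitary : Matrix n n ℂ) *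
      Matrix.diagonal (((↑) : ℝ → ℂ) ∘ (√·) ∘ hM.1.eigenvalues) *
      (star hM.1.eigenvectorUnitary : Matrix n n ℂ)) *
    ((hM.1.eigenvectorUnitary : Matrix n n ℂ) *
      Matrix.diagonal (((↑) : ℝ → ℂ) ∘ (√·) ∘ hM.1.eigenvalues) *
      (star hM.1.eigenvectorUnitary : Matrix n n ℂ)) = M := by
  set V : Matrix n n ℂ := (hM.1.eigenvectorUnitary : Matrix n n ℂ) with hV
  have hV1 : star V * V = 1 := mem_unitaryGroup_iff'.mp hM.1.eigenvectorUnitary.2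
  constructor
  · have hd : (Matrix.diagonal (((↑) : ℝ → ℂ) ∘ (√·) ∘ hM.1.eigenvalues)).PosSemidef :=
      posSemidef_diagonal_iff.mpr fun i => by
        simp only [Function.comp_apply]
        exact_mod_cast Real.sqrt_nonneg _
    have := hd.mul_mul_conjTranspose_same V
    rwa [Matrix.star_eq_conjTranspose]
  · rw [conj_mul_conj hV1, diagonal_mul_diagonal]
    conv_rhs => rw [show M = V * diagonal (fun j => ((hM.1.eigenvalues j : ℝ) : ℂ)) * star V from
      hM.1.spectral_theorem]
    refine congrArg (fun M => V * M * star V) (congrArg diagonal (funext fun j => ?_))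
    simp only [Function.comp_apply]
    rw [← Complex.ofReal_mul, Real.mul_self_sqrt (hM.eigenvalues_nonneg j)]

lemma smul_one_posSemidef {ε : ℝ} (hε : 0 ≤ ε) :
    ((ε : ℂ) • (1 : Matrix n n ℂ)).PosSemidef := by
  have h : (ε : ℂ) • (1 : Matrix n n ℂ) = diagonal fun _ => (ε : ℂ) := by
    ext i j
    by_cases h : i = j <;> simp [h, Matrix.one_apply, Matrix.diagonal_apply]
  rw [h]
  exact posSemidef_diagonal_iff.mpr fun i => by exact_mod_cast hε

end aux

end AuxExpectedTraceNorm


/-- for finitely many Hermitian matrices `A_i` with probability weights `p_i`,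
the expected trace norm satisfies `E‖A_i‖_1 = E tr√(A_i²) ≤ tr√(E[A_i²])`.
Here `‖A_i‖_1 = Σ_j |eigenvalue_j(A_i)|` and `√` of the positive semidefinite matrix
`E[A_i²] = Σ_i p_i A_i²` is its positive semidefinite square root. -/
theorem expected_trace_norm_le {n : Type*} [Fintype n] [DecidableEq n] (m : ℕ)
    (A : Fin m → Matrix n n ℂ) (hA : ∀ i, (A i).IsHermitian)
    (p : Fin m → ℝ) (hp : ∀ i, 0 ≤ p i) (hps : ∑ i, p i = 1)
    (hS : (∑ i, (p i : ℂ) • (A i * A i)).PosSemidef) :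
    ∑ i, p i * (∑ j, |(hA i).eigenvalues j|) ≤ ((hS.1.eigenvectorUnitary : Matrix n n ℂ) *
      Matrix.diagonal (((↑) : ℝ → ℂ) ∘ (√·) ∘ hS.1.eigenvalues) *
      (star hS.1.eigenvectorUnitary : Matrix n n ℂ)).trace.re := by
  classical
  set S := ∑ i, (p i : ℂ) • (A i * A i) with hSdef
  set T := (hS.1.eigenvectorUnitary : Matrix n n ℂ) *
      Matrix.diagonal (((↑) : ℝ → ℂ) ∘ (√·) ∘ hS.1.eigenvalues) *
      (star hS.1.eigenvectorUnitary : Matrix n n ℂ) with hTdef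
  have hTpsd : T.PosSemidef := (psd_sqrt_facts _ hS).1
  have hTT : T * T = S := (psd_sqrt_facts _ hS).2
  set b := T.trace.re with hb
  have hex := fun i => exists_abs_matrix (A i) (hA i)
  choose B hB1 hB2 hB3 using hex
  set r : Fin m → ℝ := fun i => p i * ∑ j, |(hA i).eigenvalues j| with hr
  have hrn : ∀ i, 0 ≤ r i := fun i =>
    mul_nonneg (hp i) (Finset.sum_nonneg fun j _ => abs_nonneg _)
  set N := (Fintype.card n : ℝ) with hN
  have hNpos : 0 ≤ N := by positivity
  have hbnn : 0 ≤ b := (eps_facts T hTpsd one_pos).2.2.2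
  have key : ∀ ε : ℝ, 0 < ε → (∑ i, r i) ^ 2 ≤ (b + ε * N) * b := by
    intro ε hε
    obtain ⟨hdet, hineq, htr, -⟩ := eps_facts T hTpsd hε
    set E := T + (ε : ℂ) • 1 with hEdef
    have hEpsd : E.PosSemidef := hTpsd.add (smul_one_posSemidef hε.le)
    set W := (hEpsd.1.eigenvectorUnitary : Matrix n n ℂ) *
      Matrix.diagonal (((↑) : ℝ → ℂ) ∘ (√·) ∘ hEpsd.1.eigenvalues) *
      (star hEpsd.1.eigenvectorUnitary : Matrix n n ℂ) with hWdef
    have hWpsd : W.PosSemidef := (psd_sqrt_facts _ hEpsd).1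
    have hWW : W * W = E := (psd_sqrt_facts _ hEpsd).2
    have hWdet : IsUnit W.det := by
      have hd : W.det * W.det = E.det := by rw [← Matrix.det_mul, hWW]
      rw [isUnit_iff_ne_zero] at hdet ⊢
      intro h
      exact hdet (by rw [← hd, h, zero_mul])
    have hWinv : W * W⁻¹ = 1 := Matrix.mul_nonsing_inv W hWdet
    have hWH : Wᴴ = W := hWpsd.1
    have hWiH : (W⁻¹)ᴴ = W⁻¹ := by rw [Matrix.conjTranspose_nonsing_inv, hWH]
    set c : Fin m → ℂ := fun i => ((Real.sqrt (p i) : ℝ) : ℂ) with hc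
    have hcstar : ∀ i, star (c i) = c i := fun i => Complex.conj_ofReal _
    have hcc : ∀ i, c i * c i = (p i : ℂ) := fun i => by
      rw [hc, ← Complex.ofReal_mul, Real.mul_self_sqrt (hp i)]
    set X : Fin m → Matrix n n ℂ := fun i => c i • W with hX
    set Y : Fin m → Matrix n n ℂ := fun i => c i • (W⁻¹ * B i) with hY
    have hXc : ∀ i, (X i)ᴴ = c i • W := by
      intro i
      rw [hX, Matrix.conjTranspose_smul, hWH, hcstar]
    have hYc : ∀ i, (Y i)ᴴ = c i • (B i * W⁻¹) := by
      intro i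
      rw [hY, Matrix.conjTranspose_smul, hcstar, Matrix.conjTranspose_mul, hWiH, (hB1 i).eq]
    set f : Fin m → ℝ := fun i => p i * E.trace.re with hf
    set g : Fin m → ℝ := fun i => ((Y i)ᴴ * Y i).trace.re with hg
    have claim1 : ∀ i, ((X i)ᴴ * Y i).trace.re = r i := by
      intro i
      have h1 : (X i)ᴴ * Y i = (p i : ℂ) • B i := by
        rw [hXc i, hY, Matrix.smul_mul, Matrix.mul_smul, ← Matrix.mul_assoc, hWinv,
          Matrix.one_mul, smul_smul, hcc]
      rw [h1, Matrix.trace_smul, hB3 i, smul_eq_mul, ← Complex.ofReal_mul, Complex.ofReal_re]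
    have claim2 : ∀ i, ((X i)ᴴ * X i).trace.re = f i := by
      intro i
      have h1 : (X i)ᴴ * X i = (p i : ℂ) • E := by
        rw [hXc i, hX, Matrix.smul_mul, Matrix.mul_smul, smul_smul, hcc, hWW]
      rw [h1, Matrix.trace_smul, smul_eq_mul]
      simp [Complex.mul_re, Complex.ofReal_re, Complex.ofReal_im]
      rfl
    have claim3 : ∀ i, g i = p i * ((E⁻¹ * (A i * A i)).trace.re) := by
      intro i
      have hEinv : E⁻¹ = W⁻¹ * W⁻¹ := by rw [← hWW, Matrix.mul_inv_rev]
      have h1 : (Y i)ᴴ * Y i = (p i : ℂ) • (B i * E⁻¹ * B i) := by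
        rw [hYc i, hY, Matrix.smul_mul, Matrix.mul_smul, smul_smul, hcc, hEinv]
        congr 1
        rw [← Matrix.mul_assoc, Matrix.mul_assoc (B i) W⁻¹ W⁻¹]
      have h2 : (B i * E⁻¹ * B i).trace = (E⁻¹ * (A i * A i)).trace := by
        rw [trace_mul_cycle (B i) E⁻¹ (B i), hB2 i, trace_mul_comm]
      show ((Y i)ᴴ * Y i).trace.re = _
      rw [h1, Matrix.trace_smul, smul_eq_mul, h2]
      simp [Complex.mul_re, Complex.ofReal_re, Complex.ofReal_im]
    have hfnn : ∀ i, 0 ≤ f i := by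
      intro i
      have : E.trace.re = b + ε * N := htr
      refine mul_nonneg (hp i) ?_
      rw [this]
      positivity
    have hgnn : ∀ i, 0 ≤ g i := fun i => trace_conjTranspose_mul_self_nonneg _
    have hsumf : ∑ i, f i = b + ε * N := by
      rw [hf]
      rw [← Finset.sum_mul, hps, one_mul, htr]
    have hsumg : ∑ i, g i ≤ b := by
      have h1 : E⁻¹ * S = ∑ i, (p i : ℂ) • (E⁻¹ * (A i * A i)) := by
        rw [hSdef, Finset.mul_sum]
        exact Finset.sum_congr rfl fun i _ => Matrix.mul_smul _ _ _
      have h2 : (∑ i, g i) = (E⁻¹ * (T * T)).trace.re := by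
        rw [hTT, h1, Matrix.trace_sum, Complex.re_sum]
        refine Finset.sum_congr rfl fun i _ => ?_
        rw [claim3 i, Matrix.trace_smul, smul_eq_mul]
        simp [Complex.mul_re, Complex.ofReal_re, Complex.ofReal_im]
      rw [h2]
      exact hineq
    have hstep : ∀ i, r i ≤ Real.sqrt (f i * g i) := by
      intro i
      calc r i = ((X i)ᴴ * Y i).trace.re := (claim1 i).symm
        _ ≤ Real.sqrt (((X i)ᴴ * X i).trace.re * ((Y i)ᴴ * Y i).trace.re) :=
            trace_cauchy_schwarz _ _
        _ = Real.sqrt (f i * g i) := by rw [claim2 i]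
    have hsum1 : ∑ i, r i ≤ ∑ i, Real.sqrt (f i * g i) := Finset.sum_le_sum fun i _ => hstep i
    have hsum2 : (∑ i, Real.sqrt (f i * g i)) ^ 2 ≤ (∑ i, f i) * ∑ i, g i :=
      Finset.sum_sq_le_sum_mul_sum_of_sq_eq_mul Finset.univ (fun i _ => hfnn i)
        (fun i _ => hgnn i)
        (fun i _ => Real.sq_sqrt (mul_nonneg (hfnn i) (hgnn i)))
    calc (∑ i, r i) ^ 2 ≤ (∑ i, Real.sqrt (f i * g i)) ^ 2 := by
          have h0 : 0 ≤ ∑ i, r i := Finset.sum_nonneg fun i _ => hrn i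
          exact pow_le_pow_left₀ h0 hsum1 2
      _ ≤ (∑ i, f i) * ∑ i, g i := hsum2
      _ ≤ (b + ε * N) * b := by
          rw [hsumf]
          refine mul_le_mul_of_nonneg_left hsumg ?_
          positivity
  have hc0 : 0 ≤ ∑ i, r i := Finset.sum_nonneg fun i _ => hrn i
  have hsq : (∑ i, r i) ^ 2 ≤ b ^ 2 := by
    refine le_of_forall_pos_le_add fun δ hδ => ?_
    have hden : 0 < N * b + 1 := by positivity
    have hεpos : 0 < δ / (N * b + 1) := by positivity
    calc (∑ i, r i) ^ 2 ≤ (b + δ / (N * b + 1) * N) * b := key _ hεpos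
      _ = b ^ 2 + δ / (N * b + 1) * (N * b) := by ring
      _ ≤ b ^ 2 + δ := by
          have h1 : δ / (N * b + 1) * (N * b) ≤ δ / (N * b + 1) * (N * b + 1) := by
            refine mul_le_mul_of_nonneg_left (by linarith) hεpos.le
          rw [div_mul_cancel₀ _ hden.ne'] at h1
          linarith
  have : ∑ i, r i ≤ b := by nlinarith [hsq, hc0, hbnn]
  exact this
end
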